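/- arXiv:1612.08838 — 2 statements merged into one kernel-verified Lean document; each statement's English description precedes it below -/
import Mathlib

section
/- Let τ be a measurable cardinal and U a τ-complete free ultrafilter on τ. Then the space X = τ ∪ {U} ⊆ βτ is not κ-metrizable: no function ρ' : X × RC(X) → [0,∞) satisfies (K1)–(K4). In particular there exists a countably κ-metrizable space that is not κ-metrizable (assuming a measurable cardinal exists). -/
open Set Topology

section Defs

variable {X : Type*}

/-- A set is regular closed if it equals the closure of its interior. -/
def IsRegClosed [TopologicalSpace X] (C : Set X) : Prop := closure (interior C) = C

/-- A set is regular open if it equals the interior of its closure. -/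
def IsRegOpen [TopologicalSpace X] (V : Set X) : Prop := interior (closure V) = V

/-- A countable κ-metric: axioms (K1)-(K3) and (K4_ω). -/
structure IsCountKappaMetric [TopologicalSpace X] (ρ : X → Set X → ℝ) : Prop where
  nonneg : ∀ x C, IsRegClosed C → 0 ≤ ρ x C
  k1 : ∀ x C, IsRegClosed C → (ρ x C = 0 ↔ x ∈ C)
  k2 : ∀ x C D, IsRegClosed C → IsRegClosed D → C ⊆ D → ρ x D ≤ ρ x C
  k3 : ∀ C, IsRegClosed C → Continuous fun x => ρ x C
  k4omega : ∀ C : ℕ → Set X, (∀ n, IsRegClosed (C n)) → (∀ n, C n ⊆ C (n + 1)) →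
    ∀ x, ρ x (closure (⋃ n, C n)) = ⨅ n, ρ x (C n)

/-- Axiom (K4): the infimum identity for arbitrary nonempty totally ordered
(by inclusion) families of regular closed sets. -/
def K4Chains [TopologicalSpace X] (ρ : X → Set X → ℝ) : Prop :=
  ∀ 𝒞 : Set (Set X), 𝒞.Nonempty → (∀ C ∈ 𝒞, IsRegClosed C) →
    (∀ C ∈ 𝒞, ∀ D ∈ 𝒞, C ⊆ D ∨ D ⊆ C) →
    ∀ x, ρ x (closure (⋃₀ 𝒞)) = sInf ((ρ x) '' 𝒞)

/-- A (full) κ-metric: axioms (K1)-(K4). -/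
structure IsKappaMetric [TopologicalSpace X] (ρ : X → Set X → ℝ)
    extends IsCountKappaMetric ρ : Prop where
  k4 : K4Chains ρ

/-- Countable chain condition. -/
def CCCSpace (X : Type*) [TopologicalSpace X] : Prop :=
  ∀ 𝒪 : Set (Set X), (∀ U ∈ 𝒪, IsOpen U ∧ U.Nonempty) →
    𝒪.PairwiseDisjoint id → 𝒪.Countable

/-- Pseudocompactness: every continuous real-valued function is bounded. -/
def Pseudocompact (X : Type*) [TopologicalSpace X] : Prop :=
  ∀ f : X → ℝ, Continuous f → ∃ M, ∀ x, |f x| ≤ M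

/-- d-open maps. -/
def IsDOpen {Y : Type*} [TopologicalSpace X] [TopologicalSpace Y] (f : X → Y) : Prop :=
  ∀ U : Set X, IsOpen U → f '' U ⊆ interior (closure (f '' U))

/-- Q-admissible families of regular open sets with respect to ρ. -/
def QAdmissible [TopologicalSpace X] (ρ : X → Set X → ℝ) (P : Set (Set X)) : Prop :=
  (∀ V ∈ P, IsRegOpen V) ∧
  (∀ V ∈ P, ∀ q : ℚ,
    interior ((fun x => ρ x (closure V)) ⁻¹' Iic (q : ℝ)) ∈ P ∧
    interior ((fun x => ρ x (closure V)) ⁻¹' Ici (q : ℝ)) ∈ P) ∧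
  (∀ V ∈ P, interior Vᶜ ∈ P) ∧
  (∀ U ∈ P, ∀ V ∈ P, U ∩ V ∈ P ∧ interior (closure (U ∪ V)) ∈ P)

/-- The equivalence relation ∼_P. -/
def pSetoid (P : Set (Set X)) : Setoid X where
  r x y := ∀ V ∈ P, (x ∈ V ↔ y ∈ V)
  iseqv := ⟨fun _ _ _ => Iff.rfl, fun h V hV => (h V hV).symm,
    fun h1 h2 V hV => (h1 V hV).trans (h2 V hV)⟩

/-- The quotient X_P. -/
def XP (P : Set (Set X)) : Type _ := Quotient (pSetoid P)

/-- The quotient map q : X → X_P. -/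
def qP (P : Set (Set X)) : X → XP P := Quotient.mk (pSetoid P)

/-- The topology on X_P generated by images of members of P. -/
def topXP [TopologicalSpace X] (P : Set (Set X)) : TopologicalSpace (XP P) :=
  TopologicalSpace.generateFrom ((fun V => qP P '' V) '' P)

end Defs

section Ult

variable {τ : Type*} (U : Ultrafilter τ)

/-- The space X = τ ∪ {U} ⊆ βτ, as a subspace of the space of ultrafilters on
the discrete space τ. -/
def UltSp : Type _ := {u : Ultrafilter τ // (∃ a, u = pure a) ∨ u = U}

instance : TopologicalSpace (UltSp U) :=
  instTopologicalSpaceSubtype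

/-- The point of X corresponding to the ultrafilter U. -/
def UltSp.pt : UltSp U := ⟨U, Or.inr rfl⟩

/-- The point of X corresponding to an element a of τ. -/
def UltSp.ofBase (a : τ) : UltSp U := ⟨pure a, Or.inl ⟨a, rfl⟩⟩

/-- "C ∩ τ ∈ U", for a subset C of X. -/
def UltSp.traceMem (C : Set (UltSp U)) : Prop := {a : τ | UltSp.ofBase U a ∈ C} ∈ U

/-- U is a free ultrafilter. -/
def UltSp.Free : Prop := ∀ a : τ, U ≠ pure a

/-- The indicator "κ-metric" ρ(x,C) = 0 iff x ∈ C, else 1. -/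
noncomputable def UltSp.rho : UltSp U → Set (UltSp U) → ℝ :=
  fun x C => Cᶜ.indicator (fun _ => (1 : ℝ)) x

end Ult

section Aux

open UltSp

variable {τ : Type*} {U : Ultrafilter τ}

/-- The trace of a subset of `X` on `τ`. -/
def trS (U : Ultrafilter τ) (S : Set (UltSp U)) : Set τ := {a | UltSp.ofBase U a ∈ S}

lemma ofBase_inj {a b : τ} (h : UltSp.ofBase U a = UltSp.ofBase U b) : a = b := by
  have h2 : (pure a : Ultrafilter τ) = pure b := congrArg Subtype.val h
  have h3 : ({a} : Set τ) ∈ (pure b : Ultrafilter τ) := by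
    rw [← h2]; exact Ultrafilter.mem_pure.mpr rfl
  exact (Ultrafilter.mem_pure.mp h3).symm

lemma singleton_not_mem (hfree : UltSp.Free U) (a : τ) : ({a} : Set τ) ∉ U := by
  intro h
  obtain ⟨x, hx, hUx⟩ := Ultrafilter.eq_pure_of_finite_mem (Set.finite_singleton a) h
  exact hfree x (by rw [hUx, Set.mem_singleton_iff.mp hx])

lemma pt_ne_ofBase (hfree : UltSp.Free U) (a : τ) : UltSp.pt U ≠ UltSp.ofBase U a := by
  intro h
  exact hfree a (congrArg Subtype.val h)

lemma cases_pt_ofBase (x : UltSp U) : x = UltSp.pt U ∨ ∃ a, x = UltSp.ofBase U a := by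
  rcases x.2 with ⟨a, h⟩ | h
  · exact Or.inr ⟨a, Subtype.ext h⟩
  · exact Or.inl (Subtype.ext h)

lemma isOpen_basic (s : Set τ) : IsOpen {x : UltSp U | s ∈ x.1} :=
  (ultrafilter_isOpen_basic s).preimage continuous_subtype_val

lemma isOpen_iff_trS (hfree : UltSp.Free U) {S : Set (UltSp U)} :
    IsOpen S ↔ (UltSp.pt U ∈ S → trS U S ∈ U) := by
  constructor
  · intro hS hpt
    obtain ⟨T, hT, rfl⟩ := isOpen_induced_iff.mp hS
    have hUT : (U : Ultrafilter τ) ∈ T := hpt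
    obtain ⟨B, ⟨s, rfl⟩, hUB, hBT⟩ :=
      ultrafilterBasis_is_basis.exists_subset_of_mem_open hUT hT
    refine Filter.mem_of_superset (hUB : s ∈ U) ?_
    intro a ha
    exact hBT (show s ∈ (pure a : Ultrafilter τ) from Ultrafilter.mem_pure.mpr ha)
  · intro h
    rw [isOpen_iff_forall_mem_open]
    intro x hx
    rcases cases_pt_ofBase x with rfl | ⟨a, rfl⟩
    · refine ⟨{y : UltSp U | trS U S ∈ y.1}, ?_, isOpen_basic _, h hx⟩
      intro y hy
      rcases cases_pt_ofBase y with rfl | ⟨b, rfl⟩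
      · exact hx
      · exact Ultrafilter.mem_pure.mp hy
    · refine ⟨{y : UltSp U | ({a} : Set τ) ∈ y.1}, ?_, isOpen_basic _,
        Ultrafilter.mem_pure.mpr rfl⟩
      intro y hy
      rcases cases_pt_ofBase y with rfl | ⟨b, rfl⟩
      · exact absurd hy (singleton_not_mem hfree a)
      · have hba : b = a := Ultrafilter.mem_pure.mp hy
        rw [hba]; exact hx

lemma mem_closure_ofBase (hfree : UltSp.Free U) {S : Set (UltSp U)} {a : τ} :
    UltSp.ofBase U a ∈ closure S ↔ UltSp.ofBase U a ∈ S := by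
  refine ⟨fun h => ?_, fun h => subset_closure h⟩
  obtain ⟨y, hy1, hy2⟩ := mem_closure_iff.mp h {y : UltSp U | ({a} : Set τ) ∈ y.1}
    (isOpen_basic _) (Ultrafilter.mem_pure.mpr rfl)
  rcases cases_pt_ofBase y with rfl | ⟨b, rfl⟩
  · exact absurd hy1 (singleton_not_mem hfree a)
  · have hba : b = a := Ultrafilter.mem_pure.mp hy1
    rw [← hba]; exact hy2

lemma pt_mem_closure_iff (hfree : UltSp.Free U) {W : Set (UltSp U)} (hW : IsOpen W) :
    UltSp.pt U ∈ closure W ↔ trS U W ∈ U := by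
  constructor
  · intro h
    by_contra hn
    have hc : (trS U W)ᶜ ∈ U := Ultrafilter.compl_mem_iff_notMem.mpr hn
    obtain ⟨y, hy1, hy2⟩ := mem_closure_iff.mp h {y : UltSp U | (trS U W)ᶜ ∈ y.1}
      (isOpen_basic _) hc
    rcases cases_pt_ofBase y with rfl | ⟨b, rfl⟩
    · exact hn ((isOpen_iff_trS hfree).mp hW hy2)
    · exact (Ultrafilter.mem_pure.mp hy1) hy2
  · intro h
    rw [mem_closure_iff]
    intro o ho hpto
    have hto : trS U o ∈ U := (isOpen_iff_trS hfree).mp ho hpto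
    obtain ⟨a, ha⟩ := Ultrafilter.nonempty_of_mem (Filter.inter_mem hto h)
    exact ⟨UltSp.ofBase U a, ha.1, ha.2⟩

lemma isClopen_closure_of_isOpen (hfree : UltSp.Free U) {W : Set (UltSp U)}
    (hW : IsOpen W) : IsClopen (closure W) := by
  refine ⟨isClosed_closure, (isOpen_iff_trS hfree).mpr fun hpt => ?_⟩
  have h1 : trS U W ∈ U := (pt_mem_closure_iff hfree hW).mp hpt
  exact Filter.mem_of_superset h1 fun a ha => subset_closure ha

lemma isRegClosed_closure_of_isOpen {W : Set (UltSp U)} (hW : IsOpen W) :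
    IsRegClosed (closure W) := by
  refine subset_antisymm ?_ ?_
  · calc closure (interior (closure W)) ⊆ closure (closure W) := closure_mono interior_subset
      _ = closure W := closure_closure
  · exact closure_mono ((hW.subset_interior_iff).mpr subset_closure)

lemma regClosed_isClopen (hfree : UltSp.Free U) {C : Set (UltSp U)}
    (hC : IsRegClosed C) : IsClopen C := by
  rw [← hC]; exact isClopen_closure_of_isOpen hfree isOpen_interior

lemma isRegClosed_of_isClopen {C : Set (UltSp U)} (hC : IsClopen C) : IsRegClosed C := by
  unfold IsRegClosed
  rw [hC.2.interior_eq, hC.1.closure_eq]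

lemma small_not_mem (hfree : UltSp.Free U)
    (hcomplete : ∀ 𝒜 : Set (Set τ), (∀ A ∈ 𝒜, A ∈ U) →
      Cardinal.mk 𝒜 < Cardinal.mk τ → ⋂₀ 𝒜 ∈ U)
    {A : Set τ} (hA : Cardinal.mk A < Cardinal.mk τ) : A ∉ U := by
  have h2 : ⋂₀ ((fun a => ({a}ᶜ : Set τ)) '' A) ∈ U := by
    refine hcomplete _ ?_ (lt_of_le_of_lt Cardinal.mk_image_le hA)
    rintro B ⟨a, _, rfl⟩
    exact Ultrafilter.compl_mem_iff_notMem.mpr (singleton_not_mem hfree a)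
  have h3 : ⋂₀ ((fun a => ({a}ᶜ : Set τ)) '' A) = Aᶜ := by
    ext x
    simp only [Set.mem_sInter, Set.mem_image, Set.mem_compl_iff, Set.mem_singleton_iff]
    constructor
    · intro h hx
      exact h {x}ᶜ ⟨x, hx, rfl⟩ rfl
    · rintro h B ⟨a, ha, rfl⟩ hxa
      exact h (by rwa [Set.mem_singleton_iff.mp hxa])
  rw [h3] at h2
  exact Ultrafilter.compl_mem_iff_notMem.mp h2

lemma countable_union_not_mem (hfree : UltSp.Free U)
    (hcomplete : ∀ 𝒜 : Set (Set τ), (∀ A ∈ 𝒜, A ∈ U) →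
      Cardinal.mk 𝒜 < Cardinal.mk τ → ⋂₀ 𝒜 ∈ U)
    (huncount : Cardinal.aleph0 < Cardinal.mk τ)
    {A : ℕ → Set τ} (h : ∀ n, A n ∉ U) : (⋃ n, A n) ∉ U := by
  have h2 : ⋂₀ (Set.range fun n => (A n)ᶜ) ∈ U := by
    refine hcomplete _ ?_ ?_
    · rintro B ⟨n, rfl⟩
      exact Ultrafilter.compl_mem_iff_notMem.mpr (h n)
    · refine lt_of_le_of_lt ?_ huncount
      have hl := Cardinal.mk_range_le_lift (f := fun n => (A n)ᶜ)
      simpa using hl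
  have h3 : ⋂₀ (Set.range fun n => (A n)ᶜ) = (⋃ n, A n)ᶜ := by
    ext x
    simp [Set.mem_sInter, Set.mem_range]
  rw [h3] at h2
  exact Ultrafilter.compl_mem_iff_notMem.mp h2

lemma iInf_eq_zero_of_lt_one_div {f : ℕ → ℝ} (h0 : ∀ n, 0 ≤ f n)
    (h : ∀ n : ℕ, f n < 1 / (n + 1)) : (⨅ n, f n) = 0 := by
  have hbdd : BddBelow (Set.range f) := ⟨0, by rintro y ⟨n, rfl⟩; exact h0 n⟩
  refine le_antisymm ?_ (le_ciInf h0)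
  by_contra hc
  push_neg at hc
  obtain ⟨n, hn⟩ := exists_nat_one_div_lt hc
  exact absurd ((ciInf_le hbdd n).trans_lt (h n)) (not_lt.mpr hn.le)

/-- The countable κ-metric on `X`. -/
lemma isCountKappaMetric_rho (hfree : UltSp.Free U)
    (huncount : Cardinal.aleph0 < Cardinal.mk τ)
    (hcomplete : ∀ 𝒜 : Set (Set τ), (∀ A ∈ 𝒜, A ∈ U) →
      Cardinal.mk 𝒜 < Cardinal.mk τ → ⋂₀ 𝒜 ∈ U) :
    IsCountKappaMetric (UltSp.rho U) := by
  have hval : ∀ (x : UltSp U) (C : Set (UltSp U)),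
      (x ∈ C → UltSp.rho U x C = 0) ∧ (x ∉ C → UltSp.rho U x C = 1) := by
    intro x C
    constructor
    · intro h
      exact Set.indicator_of_notMem (by simpa using h) _
    · intro h
      exact Set.indicator_of_mem (by simpa using h) _
  constructor
  · intro x C _
    exact Set.indicator_nonneg (fun _ _ => zero_le_one) x
  · intro x C _
    constructor
    · intro h
      by_contra hx
      rw [(hval x C).2 hx] at h
      exact one_ne_zero h
    · exact (hval x C).1
  · intro x C D _ _ hCD
    by_cases hx : x ∈ D
    · rw [(hval x D).1 hx]
      exact Set.indicator_nonneg (fun _ _ => zero_le_one) x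
    · rw [(hval x D).2 hx, (hval x C).2 (fun h => hx (hCD h))]
  · intro C hC
    have hcl : IsClopen C := regClosed_isClopen hfree hC
    refine Continuous.indicator (fun a ha => absurd ha ?_) continuous_const
    rw [(isClopen_compl_iff.mpr hcl).frontier_eq]
    exact Set.notMem_empty a
  · intro C hC hmono x
    have hCcl : ∀ n, IsClopen (C n) := fun n => regClosed_isClopen hfree (hC n)
    have hWopen : IsOpen (⋃ n, C n) := isOpen_iUnion fun n => (hCcl n).2
    by_cases hx : x ∈ ⋃ n, C n
    · obtain ⟨n, hn⟩ := Set.mem_iUnion.mp hx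
      rw [(hval x _).1 (subset_closure hx)]
      have hb : BddBelow (Set.range fun n => UltSp.rho U x (C n)) :=
        ⟨0, by rintro y ⟨m, rfl⟩; exact Set.indicator_nonneg (fun _ _ => zero_le_one) x⟩
      symm
      refine le_antisymm ?_ (le_ciInf fun m => Set.indicator_nonneg (fun _ _ => zero_le_one) x)
      calc (⨅ m, UltSp.rho U x (C m)) ≤ UltSp.rho U x (C n) := ciInf_le hb n
        _ = 0 := (hval x _).1 hn
    · have hxcl : x ∉ closure (⋃ n, C n) := by
        rcases cases_pt_ofBase x with rfl | ⟨a, rfl⟩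
        · intro hmem
          have htr : trS U (⋃ n, C n) ∈ U := (pt_mem_closure_iff hfree hWopen).mp hmem
          have hn : ∀ n, trS U (C n) ∉ U := by
            intro n hTn
            have h1 : UltSp.pt U ∈ closure (C n) :=
              (pt_mem_closure_iff hfree (hCcl n).2).mpr hTn
            rw [(hCcl n).1.closure_eq] at h1
            exact hx (Set.mem_iUnion.mpr ⟨n, h1⟩)
          have hun : (⋃ n, trS U (C n)) ∉ U :=
            countable_union_not_mem hfree hcomplete huncount hn
          refine hun ?_
          have : trS U (⋃ n, C n) = ⋃ n, trS U (C n) := by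
            ext a; simp [trS]
          rwa [← this]
        · exact fun hmem => hx ((mem_closure_ofBase hfree).mp hmem)
      rw [(hval x _).2 hxcl]
      have h2 : ∀ n, UltSp.rho U x (C n) = 1 := fun n =>
        (hval x _).2 (fun h => hx (Set.mem_iUnion.mpr ⟨n, h⟩))
      simp only [h2]
      exact (ciInf_const).symm

end Aux

/-- for measurable τ and τ-complete free U, the space X = τ ∪ {U} is
countably κ-metrizable but not κ-metrizable. -/
theorem stmt4 {τ : Type*} (U : Ultrafilter τ)
    (huncount : Cardinal.aleph0 < Cardinal.mk τ)
    (hfree : UltSp.Free U)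
    (hcomplete : ∀ 𝒜 : Set (Set τ), (∀ A ∈ 𝒜, A ∈ U) →
      Cardinal.mk 𝒜 < Cardinal.mk τ → ⋂₀ 𝒜 ∈ U) :
    (∃ ρ : UltSp U → Set (UltSp U) → ℝ, IsCountKappaMetric ρ) ∧
    ¬ ∃ ρ' : UltSp U → Set (UltSp U) → ℝ, IsKappaMetric ρ' := by
  classical
  refine ⟨⟨UltSp.rho U, isCountKappaMetric_rho hfree huncount hcomplete⟩, ?_⟩
  rintro ⟨ρ, hρ⟩
  -- set up a well-order of τ of type (#τ).ord, so all initial segments are small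
  have hne : Nonempty τ := Cardinal.mk_ne_zero_iff.mp
    (ne_of_gt (Cardinal.aleph0_pos.trans huncount))
  obtain ⟨a0⟩ := hne
  obtain ⟨e⟩ := Cardinal.eq.mp (Cardinal.mk_ord_toType (Cardinal.mk τ)).symm
  set Cs : τ → Set (UltSp U) := fun a => UltSp.ofBase U '' {b | e b ≤ e a} with hCs
  have htr : ∀ a, trS U (Cs a) = {b | e b ≤ e a} := by
    intro a; ext b
    simp only [trS, hCs, Set.mem_image, Set.mem_setOf_eq]
    constructor
    · rintro ⟨c, hc, hcb⟩; rwa [← ofBase_inj hcb]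
    · intro hb; exact ⟨b, hb, rfl⟩
  have hsmall : ∀ a, Cardinal.mk {b | e b ≤ e a} < Cardinal.mk τ := by
    intro a
    have h1 : Cardinal.mk {b | e b ≤ e a} = Cardinal.mk (Set.Iic (e a)) :=
      Cardinal.mk_congr (e.subtypeEquiv fun b => Iff.rfl)
    rw [h1, ← Set.Iio_insert]
    refine lt_of_le_of_lt Cardinal.mk_insert_le ?_
    exact Cardinal.add_lt_of_lt huncount.le (Cardinal.mk_Iio_ord_toType _)
      (lt_trans Cardinal.one_lt_aleph0 huncount)
  have hptnot : ∀ a, UltSp.pt U ∉ Cs a := by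
    rintro a ⟨b, _, hb⟩
    exact pt_ne_ofBase hfree b hb.symm
  have hclopen : ∀ a, IsClopen (Cs a) := by
    intro a
    constructor
    · rw [← isOpen_compl_iff]
      refine (isOpen_iff_trS hfree).mpr fun _ => ?_
      rw [show trS U (Cs a)ᶜ = (trS U (Cs a))ᶜ from rfl, htr a]
      exact Ultrafilter.compl_mem_iff_notMem.mpr
        (small_not_mem hfree hcomplete (hsmall a))
    · exact (isOpen_iff_trS hfree).mpr fun h => absurd h (hptnot a)
  have hreg : ∀ a, IsRegClosed (Cs a) := fun a => isRegClosed_of_isClopen (hclopen a)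
  have hchain : ∀ a b : τ, Cs a ⊆ Cs b ∨ Cs b ⊆ Cs a := by
    intro a b
    rcases le_total (e a) (e b) with h | h
    · exact Or.inl (Set.image_mono fun c hc => le_trans hc h)
    · exact Or.inr (Set.image_mono fun c hc => le_trans hc h)
  -- apply K4 to the full chain
  have hK4 := hρ.k4 (Set.range Cs) ⟨Cs a0, ⟨a0, rfl⟩⟩
    (by rintro C ⟨a, rfl⟩; exact hreg a)
    (by rintro C ⟨a, rfl⟩ D ⟨b, rfl⟩; exact hchain a b)
    (UltSp.pt U)
  have hUnion : ⋃₀ Set.range Cs = Set.range (UltSp.ofBase U) := by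
    apply subset_antisymm
    · rintro x ⟨C, ⟨a, rfl⟩, b, _, rfl⟩
      exact ⟨b, rfl⟩
    · rintro x ⟨b, rfl⟩
      exact ⟨Cs b, ⟨b, rfl⟩, ⟨b, show e b ≤ e b from le_rfl, rfl⟩⟩
  have hclosUniv : closure (⋃₀ Set.range Cs) = Set.univ := by
    rw [hUnion]
    apply Set.eq_univ_of_forall
    intro x
    rcases cases_pt_ofBase x with rfl | ⟨a, rfl⟩
    · refine (pt_mem_closure_iff hfree ?_).mpr ?_
      · exact (isOpen_iff_trS hfree).mpr fun h => absurd h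
          (by rintro ⟨b, hb⟩; exact pt_ne_ofBase hfree b hb.symm)
      · have huniv : trS U (Set.range (UltSp.ofBase U)) = Set.univ :=
          Set.eq_univ_of_forall fun b => ⟨b, rfl⟩
        rw [huniv]; exact Filter.univ_mem
    · exact subset_closure ⟨a, rfl⟩
  rw [hclosUniv] at hK4
  have hregU : IsRegClosed (Set.univ : Set (UltSp U)) := by
    unfold IsRegClosed; rw [interior_univ, closure_univ]
  have h0 : ρ (UltSp.pt U) Set.univ = 0 := (hρ.k1 _ _ hregU).mpr (Set.mem_univ _)
  rw [h0] at hK4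
  -- extract a sequence with small ρ-values
  have hD : ∀ n : ℕ, ∃ a : τ, ρ (UltSp.pt U) (Cs a) < 1 / (n + 1) := by
    intro n
    have hlt : sInf ((ρ (UltSp.pt U)) '' Set.range Cs) < 1 / (n + 1) := by
      rw [← hK4]; positivity
    have hnem : ((ρ (UltSp.pt U)) '' Set.range Cs).Nonempty :=
      ⟨_, Set.mem_image_of_mem _ ⟨a0, rfl⟩⟩
    obtain ⟨y, ⟨C, ⟨a, rfl⟩, rfl⟩, hy⟩ := exists_lt_of_csInf_lt hnem hlt
    exact ⟨a, hy⟩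
  choose D hDlt using hD
  -- build a monotone subsequence
  let F : ℕ → τ := fun n => Nat.rec (motive := fun _ => τ) (D 0)
    (fun n p => if Cs p ⊆ Cs (D (n + 1)) then D (n + 1) else p) n
  have hFsucc : ∀ n, F (n + 1) =
      if Cs (F n) ⊆ Cs (D (n + 1)) then D (n + 1) else F n := fun n => rfl
  have hFmono : ∀ n, Cs (F n) ⊆ Cs (F (n + 1)) := by
    intro n
    rw [hFsucc n]
    by_cases h : Cs (F n) ⊆ Cs (D (n + 1))
    · rw [if_pos h]; exact h
    · rw [if_neg h]
  have hFlt : ∀ n, ρ (UltSp.pt U) (Cs (F n)) < 1 / (n + 1) := by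
    intro n
    induction n with
    | zero => exact hDlt 0
    | succ n _ =>
      rw [hFsucc n]
      by_cases h : Cs (F n) ⊆ Cs (D (n + 1))
      · rw [if_pos h]; exact hDlt (n + 1)
      · rw [if_neg h]
        rcases hchain (F n) (D (n + 1)) with h' | h'
        · exact absurd h' h
        · exact lt_of_le_of_lt (hρ.k2 _ _ _ (hreg _) (hreg _) h') (hDlt (n + 1))
  -- apply K4ω to the subsequence
  have hK4w := hρ.k4omega (fun n => Cs (F n)) (fun n => hreg _) hFmono (UltSp.pt U)
  have hiInf : (⨅ n, ρ (UltSp.pt U) (Cs (F n))) = 0 :=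
    iInf_eq_zero_of_lt_one_div (fun n => hρ.nonneg _ _ (hreg _)) hFlt
  rw [hiInf] at hK4w
  -- but pt is not in the closure of the countable union
  have hWopen : IsOpen (⋃ n, Cs (F n)) := isOpen_iUnion fun n => (hclopen (F n)).2
  have hptn : UltSp.pt U ∉ closure (⋃ n, Cs (F n)) := by
    intro hmem
    have htrm : trS U (⋃ n, Cs (F n)) ∈ U := (pt_mem_closure_iff hfree hWopen).mp hmem
    have heq : trS U (⋃ n, Cs (F n)) = ⋃ n, trS U (Cs (F n)) := by
      ext b; simp [trS]
    rw [heq] at htrm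
    exact countable_union_not_mem hfree hcomplete huncount
      (fun n => by rw [htr]; exact small_not_mem hfree hcomplete (hsmall (F n))) htrm
  exact hptn ((hρ.k1 _ _ (isRegClosed_closure_of_isOpen hWopen)).mp hK4w)
end

section
/- Let X be a pseudocompact countably κ-metrizable space with countable κ-metric ρ and extensions ρ̄(·, F'∩X) to βX as above. If {F'_n : n ∈ ω} ⊆ RC(βX) is increasing (F'_n ⊆ F'_{n+1}) and F' = cl_{βX}(⋃_n F'_n), then for every p ∈ βX, ρ̄(p, F'∩X) = inf_n ρ̄(p, F'_n∩X). -/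
open Set Topology

section Aux

open Filter

lemma isRegClosed_closure_of_isOpen_s17 {X : Type*} [TopologicalSpace X] {U : Set X}
    (hU : IsOpen U) : IsRegClosed (closure U) := by
  refine subset_antisymm (closure_minimal interior_subset isClosed_closure) ?_
  exact closure_mono (hU.subset_interior_iff.mpr subset_closure)

/-- Key density fact: if `u x` is in the closure of an open `U ⊆ βX`, then
`x` is in the closure of `u ⁻¹' U`. -/
lemma mem_closure_preimage_stoneCechUnit {X : Type*} [TopologicalSpace X] [T35Space X]
    {U : Set (StoneCech X)} (hU : IsOpen U) {x : X}
    (hx : stoneCechUnit x ∈ closure U) : x ∈ closure (stoneCechUnit ⁻¹' U) := by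
  rw [mem_closure_iff]
  intro N hN hxN
  obtain ⟨f, fc, fx0, fK1⟩ :=
    CompletelyRegularSpace.completely_regular x Nᶜ hN.isClosed_compl (by simpa using hxN)
  let g := stoneCechExtend fc
  have hgu : ∀ z : X, g (stoneCechUnit z) = f z := fun z =>
    congrFun (stoneCechExtend_extends fc) z
  set W : Set (StoneCech X) := g ⁻¹' {t : unitInterval | (t : ℝ) < 1} with hW
  have hWopen : IsOpen W :=
    (isOpen_Iio.preimage continuous_subtype_val).preimage (continuous_stoneCechExtend fc)
  have hxW : stoneCechUnit x ∈ W := by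
    simp only [hW, Set.mem_preimage, Set.mem_setOf_eq, hgu, fx0]
    norm_num
  have hWU : (W ∩ U).Nonempty := mem_closure_iff.mp hx W hWopen hxW
  obtain ⟨x', hx'⟩ := denseRange_stoneCechUnit.exists_mem_open (hWopen.inter hU) hWU
  refine ⟨x', ?_, hx'.2⟩
  by_contra hx'N
  have : f x' = 1 := fK1 hx'N
  have : (f x' : ℝ) < 1 := by simpa [hW, hgu] using hx'.1
  simp_all

lemma preimage_stoneCechUnit_eq_closure {X : Type*} [TopologicalSpace X] [T35Space X]
    {U : Set (StoneCech X)} (hU : IsOpen U) :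
    stoneCechUnit ⁻¹' (closure U) = closure (stoneCechUnit ⁻¹' U) := by
  refine subset_antisymm (fun x hx => mem_closure_preimage_stoneCechUnit hU hx) ?_
  exact closure_minimal (Set.preimage_mono subset_closure)
    (isClosed_closure.preimage continuous_stoneCechUnit)

lemma isRegClosed_preimage_stoneCechUnit {X : Type*} [TopologicalSpace X] [T35Space X]
    {F : Set (StoneCech X)} (hF : IsRegClosed F) :
    stoneCechUnit ⁻¹' F = closure (stoneCechUnit ⁻¹' (interior F)) ∧
      IsRegClosed (stoneCechUnit ⁻¹' F) := by
  have h1 : stoneCechUnit ⁻¹' F = closure (stoneCechUnit ⁻¹' (interior F)) := by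
    conv_lhs => rw [← hF]
    exact preimage_stoneCechUnit_eq_closure isOpen_interior
  exact ⟨h1, h1 ▸ isRegClosed_closure_of_isOpen_s17 (isOpen_interior.preimage
    continuous_stoneCechUnit)⟩

lemma stoneCech_le_of_dense {X : Type*} [TopologicalSpace X]
    {f g : StoneCech X → ℝ} (hf : Continuous f) (hg : Continuous g)
    (h : ∀ x : X, f (stoneCechUnit x) ≤ g (stoneCechUnit x)) : ∀ p, f p ≤ g p := by
  intro p
  have hsub : closure (Set.range (stoneCechUnit : X → StoneCech X)) ⊆ {q | f q ≤ g q} :=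
    closure_minimal (Set.range_subset_iff.2 h) (isClosed_le hf hg)
  have hd : DenseRange (stoneCechUnit : X → StoneCech X) := denseRange_stoneCechUnit
  exact hsub (by rw [hd.closure_eq]; trivial)

/-- In a pseudocompact (completely regular) space, a decreasing sequence of nonempty
open sets has nonempty intersection of closures. -/
lemma nested_closure_nonempty {X : Type*} [TopologicalSpace X] [T35Space X]
    (hpc : Pseudocompact X) (V : ℕ → Set X) (hop : ∀ n, IsOpen (V n))
    (hne : ∀ n, (V n).Nonempty) (hanti : ∀ n, V (n + 1) ⊆ V n) :
    (⋂ n, closure (V n)).Nonempty := by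
  by_contra hempty
  rw [Set.not_nonempty_iff_eq_empty] at hempty
  have hout : ∀ x : X, ∃ m, x ∉ closure (V m) := by
    intro x
    by_contra hc
    push_neg at hc
    exact absurd (Set.mem_iInter.2 hc) (hempty ▸ Set.notMem_empty x)
  have hV : Antitone V := antitone_nat_of_succ_le hanti
  choose xs hxs using hne
  have hcr : ∀ n, ∃ f : X → unitInterval, Continuous f ∧ f (xs n) = 0 ∧
      Set.EqOn f 1 (V n)ᶜ := fun n =>
    CompletelyRegularSpace.completely_regular _ _ (hop n).isClosed_compl
      (by simp [hxs n])
  choose f hfc hf0 hf1 using hcr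
  set g : ℕ → X → ℝ := fun n x => (n : ℝ) * (1 - ((f n x : unitInterval) : ℝ)) with hg
  have hgnonneg : ∀ n x, 0 ≤ g n x := fun n x =>
    mul_nonneg (Nat.cast_nonneg n) (by linarith [(f n x).2.2])
  have hgzero : ∀ n x, x ∉ V n → g n x = 0 := by
    intro n x hx
    have : f n x = 1 := hf1 n hx
    simp [hg, this]
  have hgzero' : ∀ m x, x ∉ closure (V m) → ∀ k, m ≤ k → g k x = 0 := by
    intro m x hx k hk
    exact hgzero k x fun hxk => hx (subset_closure (hV hk hxk))
  have hgcont : ∀ n, Continuous (g n) := fun n =>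
    continuous_const.mul (continuous_const.sub (continuous_subtype_val.comp (hfc n)))
  have hsummable : ∀ x, Summable fun n => g n x := by
    intro x
    obtain ⟨m, hm⟩ := hout x
    exact summable_of_ne_finset_zero (s := Finset.range m) fun k hk =>
      hgzero' m x hm k (by simpa using hk)
  set F : X → ℝ := fun x => ∑' n, g n x with hF
  have hFcont : Continuous F := by
    rw [continuous_iff_continuousAt]
    intro x
    obtain ⟨m, hm⟩ := hout x
    have hEq : ∀ z ∈ (closure (V m))ᶜ, F z = ∑ k ∈ Finset.range m, g k z := by
      intro z hz
      exact tsum_eq_sum fun k hk => hgzero' m z hz k (by simpa using hk)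
    have hO : (closure (V m))ᶜ ∈ 𝓝 x := isClosed_closure.isOpen_compl.mem_nhds hm
    have hev : F =ᶠ[𝓝 x] fun z => ∑ k ∈ Finset.range m, g k z :=
      eventually_of_mem hO hEq
    exact ((continuous_finset_sum _ fun k _ => hgcont k).continuousAt).congr hev.symm
  obtain ⟨M, hM⟩ := hpc F hFcont
  obtain ⟨n, hn⟩ := exists_nat_gt M
  have hge : (n : ℝ) ≤ F (xs n) := by
    have := Summable.le_tsum (hsummable (xs n)) n fun k _ => hgnonneg k (xs n)
    have h1 : f n (xs n) = 0 := hf0 n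
    simpa [hF, hg, h1] using this
  have := hM (xs n)
  have := le_abs_self (F (xs n))
  linarith

end Aux

/-- the extension ρ̄ satisfies (K4_ω) on βX. -/
theorem stmt17 {X : Type*} [TopologicalSpace X] [T35Space X]
    (hpc : Pseudocompact X) (ρ : X → Set X → ℝ) (hρ : IsCountKappaMetric ρ)
    (ρbar : StoneCech X → Set (StoneCech X) → ℝ)
    (hcont : ∀ F' : Set (StoneCech X), IsRegClosed F' → Continuous fun p => ρbar p F')
    (hext : ∀ F' : Set (StoneCech X), IsRegClosed F' →
      ∀ x : X, ρbar (stoneCechUnit x) F' = ρ x (stoneCechUnit ⁻¹' F'))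
    (F' : ℕ → Set (StoneCech X)) (hF' : ∀ n, IsRegClosed (F' n))
    (hmono : ∀ n, F' n ⊆ F' (n + 1)) (p : StoneCech X) :
    ρbar p (closure (⋃ n, F' n)) = ⨅ n, ρbar p (F' n) := by
  set Fcl : Set (StoneCech X) := closure (⋃ n, F' n) with hFcl
  -- Fcl is regular closed
  have hcl_eq : Fcl = closure (⋃ n, interior (F' n)) := by
    refine subset_antisymm ?_ (closure_mono (Set.iUnion_mono fun n => interior_subset))
    refine closure_minimal (Set.iUnion_subset fun n => ?_) isClosed_closure
    rw [← hF' n]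
    exact closure_mono (Set.subset_iUnion (fun n => interior (F' n)) n)
  have hFcl_rc : IsRegClosed Fcl := by
    rw [hcl_eq]
    exact isRegClosed_closure_of_isOpen_s17 (isOpen_iUnion fun n => isOpen_interior)
  set C : ℕ → Set X := fun n => stoneCechUnit ⁻¹' (F' n) with hC
  have hC_eq : ∀ n, C n = closure (stoneCechUnit ⁻¹' (interior (F' n))) := fun n =>
    (isRegClosed_preimage_stoneCechUnit (hF' n)).1
  have hC_rc : ∀ n, IsRegClosed (C n) := fun n =>
    (isRegClosed_preimage_stoneCechUnit (hF' n)).2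
  have hCinf_rc : IsRegClosed (stoneCechUnit ⁻¹' Fcl) :=
    (isRegClosed_preimage_stoneCechUnit hFcl_rc).2
  have hCmono : ∀ n, C n ⊆ C (n + 1) := fun n x hx => hmono n hx
  -- the preimage of Fcl is the closure of the union of the C n
  have key : stoneCechUnit ⁻¹' Fcl = closure (⋃ n, C n) := by
    have e1 : stoneCechUnit ⁻¹' Fcl =
        closure (stoneCechUnit ⁻¹' (⋃ n, interior (F' n))) := by
      rw [hcl_eq]
      exact preimage_stoneCechUnit_eq_closure (isOpen_iUnion fun n => isOpen_interior)
    rw [e1]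
    refine subset_antisymm ?_ ?_
    · exact closure_mono (by
        rw [Set.preimage_iUnion]
        exact Set.iUnion_mono fun n => Set.preimage_mono interior_subset)
    · refine closure_minimal (Set.iUnion_subset fun n => ?_) isClosed_closure
      rw [hC_eq n]
      refine closure_mono fun x hx => ?_
      exact Set.mem_preimage.2 (Set.mem_iUnion.2 ⟨n, hx⟩)
  -- the identity holds on the dense copy of X
  have base : ∀ x : X, ρbar (stoneCechUnit x) Fcl = ⨅ n, ρbar (stoneCechUnit x) (F' n) := by
    intro x
    rw [hext Fcl hFcl_rc x, key]
    rw [hρ.k4omega C hC_rc hCmono x]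
    exact (iInf_congr fun n => hext (F' n) (hF' n) x).symm
  -- monotonicity transferred to βX
  have hCsub : ∀ n, C n ⊆ stoneCechUnit ⁻¹' Fcl := fun n => by
    rw [key]
    exact (Set.subset_iUnion C n).trans subset_closure
  have le1 : ∀ q n, ρbar q Fcl ≤ ρbar q (F' n) := by
    intro q n
    refine stoneCech_le_of_dense (hcont Fcl hFcl_rc) (hcont (F' n) (hF' n)) (fun x => ?_) q
    rw [hext Fcl hFcl_rc x, hext (F' n) (hF' n) x]
    exact hρ.k2 x (C n) (stoneCechUnit ⁻¹' Fcl) (hC_rc n) hCinf_rc (hCsub n)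
  have le2 : ∀ q n, ρbar q (F' (n + 1)) ≤ ρbar q (F' n) := by
    intro q n
    refine stoneCech_le_of_dense (hcont _ (hF' (n + 1))) (hcont _ (hF' n)) (fun x => ?_) q
    rw [hext _ (hF' (n + 1)) x, hext _ (hF' n) x]
    exact hρ.k2 x (C n) (C (n + 1)) (hC_rc n) (hC_rc (n + 1)) (hCmono n)
  have hbdd : ∀ q, BddBelow (Set.range fun n => ρbar q (F' n)) := fun q =>
    ⟨ρbar q Fcl, by rintro y ⟨n, rfl⟩; exact le1 q n⟩
  refine le_antisymm (le_ciInf fun n => le1 p n) ?_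
  by_contra hlt
  push_neg at hlt
  set ε : ℝ := (⨅ n, ρbar p (F' n)) - ρbar p Fcl with hε
  have hεpos : 0 < ε := by simp only [hε]; linarith
  set W : ℕ → Set (StoneCech X) :=
    fun n => {q | ε / 2 < ρbar q (F' n) - ρbar q Fcl} with hW
  have hWopen : ∀ n, IsOpen (W n) :=
    fun n => isOpen_lt continuous_const ((hcont (F' n) (hF' n)).sub (hcont Fcl hFcl_rc))
  have hpW : ∀ n, p ∈ W n := by
    intro n
    have h1 : (⨅ n, ρbar p (F' n)) ≤ ρbar p (F' n) := ciInf_le (hbdd p) n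
    simp only [hW, Set.mem_setOf_eq]
    have := hεpos
    simp only [hε] at *
    linarith
  have hWanti : ∀ n, W (n + 1) ⊆ W n := by
    intro n q hq
    simp only [hW, Set.mem_setOf_eq] at hq ⊢
    have := le2 q n
    linarith
  set V : ℕ → Set X := fun n => stoneCechUnit ⁻¹' (W n) with hVdef
  have hVopen : ∀ n, IsOpen (V n) := fun n => (hWopen n).preimage continuous_stoneCechUnit
  have hVne : ∀ n, (V n).Nonempty := fun n =>
    denseRange_stoneCechUnit.exists_mem_open (hWopen n) ⟨p, hpW n⟩
  have hVanti : ∀ n, V (n + 1) ⊆ V n := fun n x hx => hWanti n hx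
  obtain ⟨y, hy⟩ := nested_closure_nonempty hpc V hVopen hVne hVanti
  rw [Set.mem_iInter] at hy
  have hyn : ∀ n, ε / 2 ≤ ρbar (stoneCechUnit y) (F' n) - ρbar (stoneCechUnit y) Fcl := by
    intro n
    have hclosed : IsClosed {x : X |
        ε / 2 ≤ ρbar (stoneCechUnit x) (F' n) - ρbar (stoneCechUnit x) Fcl} :=
      isClosed_le continuous_const
        ((((hcont (F' n) (hF' n)).sub (hcont Fcl hFcl_rc)).comp continuous_stoneCechUnit))
    have hsub : V n ⊆ {x : X |
        ε / 2 ≤ ρbar (stoneCechUnit x) (F' n) - ρbar (stoneCechUnit x) Fcl} :=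
      fun x hx => le_of_lt (by simpa [hVdef, hW] using hx)
    exact closure_minimal hsub hclosed (hy n)
  have hbase := base y
  have hib : BddBelow (Set.range fun n => ρbar (stoneCechUnit y) (F' n)) := hbdd _
  have : ρbar (stoneCechUnit y) Fcl + ε / 2 ≤ ⨅ n, ρbar (stoneCechUnit y) (F' n) :=
    le_ciInf fun n => by linarith [hyn n]
  rw [← hbase] at this
  linarith
end
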